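/- arXiv:2412.05399 — 3 statements merged into one kernel-verified Lean document; each statement's English description precedes it below -/
import Mathlib

section
/- Let a, b, c, d, c̄, L be real with c̄ > 0, L > 0, b ≠ 0, and let n be a positive integer. Define s_n^± = (a+d)/2 ± √(bc − π²n²c̄²/L²). Then the two eigenvalues λ₁(s), λ₂(s) of M(s) = Λ⁻¹(B̃ − sI) at s = s_n^± are distinct and satisfy exp(λ₁(s)L) = exp(λ₂(s)L). -/
open Complex

theorem case2_complex_roots (a b c d cbar L : ℝ)
    (hc : 0 < cbar) (hL : 0 < L) (hb : b ≠ 0)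
    (n : ℕ) (hn : 0 < n)
    (sq : ℂ) (hsq : sq ^ 2 = (b : ℂ) * c - (Real.pi : ℂ) ^ 2 * (n : ℂ) ^ 2 * (cbar : ℂ) ^ 2 / (L : ℂ) ^ 2)
    (s : ℂ) (hs : s = ((a : ℂ) + d) / 2 + sq ∨ s = ((a : ℂ) + d) / 2 - sq)
    (Δ : ℂ) (hΔ : Δ = (((a : ℂ) - d) / cbar) ^ 2
        - 4 * (((b : ℂ) * c - ((a : ℂ) - s) * ((d : ℂ) - s)) / (cbar : ℂ) ^ 2))
    (sqΔ : ℂ) (hsqΔ : sqΔ ^ 2 = Δ)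
    (lam1 lam2 : ℂ)
    (hlam1 : lam1 = -((a : ℂ) - d) / (2 * cbar) + sqΔ / 2)
    (hlam2 : lam2 = -((a : ℂ) - d) / (2 * cbar) - sqΔ / 2) :
    lam1 ≠ lam2 ∧ Complex.exp (lam1 * L) = Complex.exp (lam2 * L) := by
  have hcbar : (cbar : ℂ) ≠ 0 := by exact_mod_cast hc.ne'
  have hLne : (L : ℂ) ≠ 0 := by exact_mod_cast hL.ne'
  have hpi : (Real.pi : ℂ) ≠ 0 := by exact_mod_cast Real.pi_ne_zero
  have hnne : (n : ℂ) ≠ 0 := by exact_mod_cast hn.ne'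
  have hsq' : sq ^ 2 * (L : ℂ) ^ 2
      = (b : ℂ) * c * (L : ℂ) ^ 2 - (Real.pi : ℂ) ^ 2 * (n : ℂ) ^ 2 * (cbar : ℂ) ^ 2 := by
    rw [hsq]; field_simp
  have hΔL : Δ * (L : ℂ) ^ 2 = -(4 * (Real.pi : ℂ) ^ 2 * (n : ℂ) ^ 2) := by
    rcases hs with hs | hs <;> subst hs <;> rw [hΔ] <;> field_simp <;>
      linear_combination (16 : ℂ) * hsq'
  have hkey : (sqΔ * L) ^ 2 = (2 * (Real.pi : ℂ) * n * I) ^ 2 := by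
    rw [mul_pow, hsqΔ, hΔL]
    linear_combination (-4 * (Real.pi : ℂ) ^ 2 * (n : ℂ) ^ 2) * I_sq
  have h2pin : (2 * (Real.pi : ℂ) * n * I) ≠ 0 := by
    simp [hpi, hnne, I_ne_zero]
  have hsqΔne : sqΔ ≠ 0 := by
    intro h
    rw [h, zero_mul] at hkey
    exact pow_ne_zero 2 h2pin (by simpa using hkey.symm)
  have hcases : sqΔ * L = 2 * (Real.pi : ℂ) * n * I ∨ sqΔ * L = -(2 * (Real.pi : ℂ) * n * I) :=
    sq_eq_sq_iff_eq_or_eq_neg.mp hkey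
  constructor
  · intro h
    apply hsqΔne
    rw [hlam1, hlam2] at h
    linear_combination h
  · have hdiff : lam1 * L = lam2 * L + sqΔ * L := by
      rw [hlam1, hlam2]; ring
    rw [hdiff, Complex.exp_add]
    suffices h : Complex.exp (sqΔ * L) = 1 by rw [h, mul_one]
    rcases hcases with h | h <;> rw [h]
    · have := Complex.exp_int_mul_two_pi_mul_I (n : ℤ)
      convert this using 2
      push_cast; ring
    · have := Complex.exp_int_mul_two_pi_mul_I (-(n : ℤ))
      convert this using 2
      push_cast; ring
end

section
/- Let a, b, c, d, c̄, L be real with c̄ > 0, L > 0, b ≠ 0, R ∈ {−1, 1}, and let s₀ = (a + R(b+c) + d)/2. Assume disc(M(s₀)) ≠ 0, and let v₁, v₂ be the eigenvectors v_{1,2} = (1, (−(a−s₀) − λ_{1,2}c̄)/b) of M(s₀). Then (−1 + R·v₁⁽²⁾)(−R + v₂⁽²⁾) = 0, i.e., s₀ is a root of the spectral equation (exp(λ₁L) − exp(λ₂L))(−1 + R·v₁⁽²⁾)(−R + v₂⁽²⁾) = 0. -/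
open Complex

theorem case2_real_root (a b c d cbar L R : ℝ)
    (hc : 0 < cbar) (hL : 0 < L) (hb : b ≠ 0)
    (hR : R = -1 ∨ R = 1)
    (s0 : ℂ) (hs0 : s0 = ((a : ℂ) + R * ((b : ℂ) + c) + d) / 2)
    (Δ : ℂ) (hΔ : Δ = (((a : ℂ) - d) / cbar) ^ 2
        - 4 * (((b : ℂ) * c - ((a : ℂ) - s0) * ((d : ℂ) - s0)) / (cbar : ℂ) ^ 2))
    (hΔne : Δ ≠ 0)
    (sqΔ : ℂ) (hsqΔ : sqΔ ^ 2 = Δ)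
    (lam1 lam2 : ℂ)
    (hlam1 : lam1 = -((a : ℂ) - d) / (2 * cbar) + sqΔ / 2)
    (hlam2 : lam2 = -((a : ℂ) - d) / (2 * cbar) - sqΔ / 2)
    (p1 p2 : ℂ)
    (hp1 : p1 = (-((a : ℂ) - s0) - lam1 * cbar) / b)
    (hp2 : p2 = (-((a : ℂ) - s0) - lam2 * cbar) / b) :
    (-1 + (R : ℂ) * p1) * (-(R : ℂ) + p2) = 0 ∧
      (Complex.exp (lam1 * L) - Complex.exp (lam2 * L)) *
        ((-1 + (R : ℂ) * p1) * (-(R : ℂ) + p2)) = 0 := by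
  have hb' : (b:ℂ) ≠ 0 := Complex.ofReal_ne_zero.mpr hb
  have hc' : (cbar:ℂ) ≠ 0 := Complex.ofReal_ne_zero.mpr hc.ne'
  have hbb : (b:ℂ) * (b:ℂ)⁻¹ = 1 := mul_inv_cancel₀ hb'
  have hR2 : (R:ℂ)^2 = 1 := by rcases hR with h | h <;> rw [h] <;> norm_num
  have hΔ' : (cbar:ℂ)^2 * sqΔ^2
      = ((a:ℂ) - d)^2 - 4 * ((b:ℂ) * c - ((a:ℂ) - s0) * ((d:ℂ) - s0)) := by
    rw [hsqΔ, hΔ]; field_simp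
  have e1 : lam1 * (cbar:ℂ) = -((a:ℂ) - d) / 2 + sqΔ * cbar / 2 := by
    rw [hlam1]; field_simp
  have e2 : lam2 * (cbar:ℂ) = -((a:ℂ) - d) / 2 - sqΔ * cbar / 2 := by
    rw [hlam2]; field_simp
  have hsum : p1 + p2 = (R:ℂ) * ((b:ℂ) + c) / b := by
    rw [hp1, hp2, ← add_div, div_eq_div_iff hb' hb', e1, e2, hs0]
    ring
  have hprod : p1 * p2 = (c:ℂ) / b := by
    rw [hp1, hp2, div_mul_div_comm, div_eq_div_iff (mul_ne_zero hb' hb') hb', e1, e2]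
    linear_combination (-(b:ℂ)/4) * hΔ'
  have h1 : (-1 + (R : ℂ) * p1) * (-(R : ℂ) + p2) = 0 := by
    linear_combination (R:ℂ) * hprod - hsum - p1 * hR2 - (R:ℂ) * hbb
  exact ⟨h1, by rw [h1, mul_zero]⟩
end

section
/- Consider the semi-discrete scheme W_t = 𝒟_h W where 𝒟_h = −Λ_D + B̃ + P with Λ_D = (Λ ⊗ D), penalty matrix P built with parameters α₀ = −c̄, α_L = −c̄ (constant c̄ > 0), and D an SBP operator (HD = Q, uᵀ(Q+Qᵀ)v = u_Nv_N − u₀v₀, H diagonal positive-definite). If |R₀| ≤ 1 and |R_L| ≤ 1, then the discrete energy E_h = WᵀH₂W with H₂ = I₂ ⊗ H satisfies dE_h/dt ≤ 2‖B̃‖_H · E_h along solutions. -/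
open Matrix Kronecker

private lemma quad_transpose {n : Type*} [Fintype n] (M : Matrix n n ℝ) (x : n → ℝ) :
    x ⬝ᵥ Mᵀ.mulVec x = x ⬝ᵥ M.mulVec x := by
  simp only [dotProduct, mulVec, transpose_apply, Finset.mul_sum]
  rw [Finset.sum_comm]
  exact Finset.sum_congr rfl fun i _ => Finset.sum_congr rfl fun j _ => by ring

private lemma kron_lam_quad (N : ℕ) (c : ℝ) (M : Matrix (Fin (N+1)) (Fin (N+1)) ℝ)
    (w : Fin 2 × Fin (N+1) → ℝ) :
    w ⬝ᵥ ((!![-c,0;0,c] : Matrix (Fin 2) (Fin 2) ℝ) ⊗ₖ M).mulVec w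
      = -c * ((fun i => w (0,i)) ⬝ᵥ M.mulVec (fun i => w (0,i)))
        + c * ((fun i => w (1,i)) ⬝ᵥ M.mulVec (fun i => w (1,i))) := by
  simp only [dotProduct, mulVec, kroneckerMap_apply, Fintype.sum_prod_type, Fin.sum_univ_two,
    Matrix.cons_val', Matrix.cons_val_zero, Matrix.cons_val_one, Matrix.head_cons,
    Matrix.empty_val', Matrix.cons_val_fin_one, Matrix.head_fin_const, Matrix.of_apply,
    zero_mul, mul_zero, add_zero, zero_add, Finset.sum_const_zero, neg_mul,
    Finset.mul_sum, Finset.sum_add_distrib, neg_zero]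
  refine congrArg₂ (·+·) ?_ ?_ <;>
    exact Finset.sum_congr rfl fun i _ => Finset.sum_congr rfl fun j _ => by ring

private lemma quad_vmv {n : Type*} [Fintype n] (x y w : n → ℝ) :
    w ⬝ᵥ (vecMulVec x y).mulVec w = (w ⬝ᵥ x) * (y ⬝ᵥ w) := by
  simp only [dotProduct, vecMulVec_apply, mulVec, Finset.mul_sum]
  rw [Finset.sum_comm]
  refine Finset.sum_congr rfl fun i _ => ?_
  rw [Finset.sum_mul]
  exact Finset.sum_congr rfl fun j _ => by ring

private lemma single_prod {N : ℕ} (a : Fin 2) (i : Fin (N+1)) :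
    (fun p : Fin 2 × Fin (N+1) => (Pi.single a 1 : Fin 2 → ℝ) p.1 * (Pi.single i 1 : Fin (N+1) → ℝ) p.2)
      = (Pi.single (a, i) 1 : Fin 2 × Fin (N+1) → ℝ) := by
  funext p
  by_cases h1 : p.1 = a <;> by_cases h2 : p.2 = i <;>
    simp [Pi.single_apply, h1, h2, Prod.ext_iff]

theorem sbp_sat_energy_estimate (N : ℕ) (cbar R0 RL μ : ℝ)
    (hc : 0 < cbar) (hR0 : |R0| ≤ 1) (hRL : |RL| ≤ 1) (hμ0 : 0 ≤ μ)
    (H D Qm : Matrix (Fin (N + 1)) (Fin (N + 1)) ℝ)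
    (hHdiag : H.IsDiag) (hHpd : H.PosDef) (hHD : H * D = Qm)
    (hSBP : ∀ u v : Fin (N + 1) → ℝ,
      u ⬝ᵥ (Qm + Qmᵀ).mulVec v = u (Fin.last N) * v (Fin.last N) - u 0 * v 0)
    (Btil : Matrix (Fin 2) (Fin 2) ℝ)
    (Lam : Matrix (Fin 2) (Fin 2) ℝ) (hLam : Lam = !![-cbar, 0; 0, cbar])
    (e0 eN : Fin (N + 1) → ℝ)
    (he0 : e0 = Pi.single 0 1) (heN : eN = Pi.single (Fin.last N) 1)
    (E1 E2 : Fin 2 → ℝ) (hE1 : E1 = Pi.single 0 1) (hE2 : E2 = Pi.single 1 1)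
    (H2 : Matrix (Fin 2 × Fin (N + 1)) (Fin 2 × Fin (N + 1)) ℝ)
    (hH2 : H2 = (1 : Matrix (Fin 2) (Fin 2) ℝ) ⊗ₖ H)
    (P : Matrix (Fin 2 × Fin (N + 1)) (Fin 2 × Fin (N + 1)) ℝ)
    (hP : P = (-cbar) • (H2⁻¹ *
          ((vecMulVec E2 E2) ⊗ₖ (vecMulVec e0 e0)
            - R0 • ((vecMulVec E2 E1) ⊗ₖ (vecMulVec e0 e0))))
        + (-cbar) • (H2⁻¹ *
          ((vecMulVec E1 E1) ⊗ₖ (vecMulVec eN eN)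
            - RL • ((vecMulVec E1 E2) ⊗ₖ (vecMulVec eN eN)))))
    (Dh : Matrix (Fin 2 × Fin (N + 1)) (Fin 2 × Fin (N + 1)) ℝ)
    (hDh : Dh = -(Lam ⊗ₖ D) + (Btil ⊗ₖ (1 : Matrix (Fin (N + 1)) (Fin (N + 1)) ℝ)) + P)
    -- μ is an H-operator-norm bound for B̃ ⊗ I
    (hμ : ∀ v : Fin 2 × Fin (N + 1) → ℝ,
      Real.sqrt (((Btil ⊗ₖ (1 : Matrix (Fin (N + 1)) (Fin (N + 1)) ℝ)).mulVec v) ⬝ᵥ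
          H2.mulVec ((Btil ⊗ₖ (1 : Matrix (Fin (N + 1)) (Fin (N + 1)) ℝ)).mulVec v))
        ≤ μ * Real.sqrt (v ⬝ᵥ H2.mulVec v))
    (W : ℝ → (Fin 2 × Fin (N + 1)) → ℝ)
    (hW : ∀ t, HasDerivAt W (Dh.mulVec (W t)) t)
    (Eh : ℝ → ℝ) (hEh : Eh = fun t => W t ⬝ᵥ H2.mulVec (W t)) :
    ∀ t, deriv Eh t ≤ 2 * μ * Eh t := by
  -- notation
  set B : Matrix (Fin 2 × Fin (N + 1)) (Fin 2 × Fin (N + 1)) ℝ :=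
    Btil ⊗ₖ (1 : Matrix (Fin (N + 1)) (Fin (N + 1)) ℝ) with hB
  -- H2 is diagonal with positive entries
  set d : Fin 2 × Fin (N + 1) → ℝ := fun p => H p.2 p.2 with hd
  have hH2d : H2 = Matrix.diagonal d := by
    rw [hH2]
    ext ⟨a, i⟩ ⟨b, j⟩
    rw [kroneckerMap_apply]
    by_cases hab : a = b
    · subst hab
      by_cases hij : i = j
      · subst hij
        rw [Matrix.diagonal_apply_eq]
        simp [Matrix.one_apply_eq, hd]
      · rw [Matrix.diagonal_apply_ne _ (fun h => hij (congrArg Prod.snd h))]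
        simp [hHdiag hij]
    · rw [Matrix.diagonal_apply_ne _ (fun h => hab (congrArg Prod.fst h))]
      simp [Matrix.one_apply_ne hab]
  have hd_pos : ∀ p, 0 < d p := by
    intro p
    have h1 : (Pi.single p.2 1 : Fin (N+1) → ℝ) ≠ 0 := by
      intro h
      have := congrFun h p.2
      simp at this
    have h2 := hHpd.dotProduct_mulVec_pos h1
    simpa [dotProduct, mulVec, Pi.single_apply, Finset.mul_sum] using h2
  -- H2 symmetric (as quadratic/bilinear form)
  have hsym : ∀ u v : Fin 2 × Fin (N + 1) → ℝ,
      u ⬝ᵥ H2.mulVec v = v ⬝ᵥ H2.mulVec u := by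
    intro u v
    simp only [hH2d, mulVec_diagonal, dotProduct]
    exact Finset.sum_congr rfl fun p _ => by ring
  -- H2 * H2⁻¹ = 1
  have hdet : IsUnit H2.det := by
    rw [hH2d, Matrix.det_diagonal]
    exact (Finset.prod_pos fun p _ => hd_pos p).ne'.isUnit
  have hinv : H2 * H2⁻¹ = 1 := Matrix.mul_nonsing_inv _ hdet
  intro t
  set w : Fin 2 × Fin (N + 1) → ℝ := W t with hw
  -- derivative of the energy
  have hWp : ∀ p, HasDerivAt (fun s => W s p) (Dh.mulVec w p) t :=
    fun p => hasDerivAt_pi.mp (hW t) p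
  have hfun : Eh = (fun s => ∑ p, ∑ q, W s p * (H2 p q * W s q)) := by
    rw [hEh]; funext s; simp [dotProduct, mulVec, Finset.mul_sum]
  have h1 : HasDerivAt (fun s => ∑ p, ∑ q, W s p * (H2 p q * W s q))
      (∑ p, ∑ q, (Dh.mulVec w p * (H2 p q * w q) + W t p * (H2 p q * Dh.mulVec w q))) t := by
    apply HasDerivAt.fun_sum; intro p _; apply HasDerivAt.fun_sum; intro q _
    exact (hWp p).mul ((hWp q).const_mul _)
  have hderiv : deriv Eh t = Dh.mulVec w ⬝ᵥ H2.mulVec w + w ⬝ᵥ H2.mulVec (Dh.mulVec w) := by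
    rw [hfun, h1.deriv]
    simp only [dotProduct, mulVec, Finset.mul_sum, Finset.sum_add_distrib, ← hw]
    try refine congrArg₂ (·+·) ?_ ?_ <;>
      exact Finset.sum_congr rfl fun i _ => Finset.sum_congr rfl fun j _ => by ring
  have hderiv2 : deriv Eh t = 2 * (w ⬝ᵥ H2.mulVec (Dh.mulVec w)) := by
    rw [hderiv, hsym (Dh.mulVec w) w]; ring
  -- split Dh
  have hsplit : w ⬝ᵥ H2.mulVec (Dh.mulVec w)
      = -(w ⬝ᵥ H2.mulVec ((Lam ⊗ₖ D).mulVec w)) + w ⬝ᵥ H2.mulVec (B.mulVec w)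
        + w ⬝ᵥ H2.mulVec (P.mulVec w) := by
    rw [hDh]
    simp [Matrix.add_mulVec, Matrix.neg_mulVec, Matrix.mulVec_add, Matrix.mulVec_neg,
      dotProduct_add, dotProduct_neg]
    try ring
  -- the advection (SBP) part
  have hLamT : Lamᵀ = Lam := by
    rw [hLam]; ext i j; fin_cases i <;> fin_cases j <;> simp
  have hH2A : H2 * (Lam ⊗ₖ D) = Lam ⊗ₖ Qm := by
    rw [hH2, ← Matrix.mul_kronecker_mul, one_mul, hHD]
  have hA2 : 2 * (w ⬝ᵥ H2.mulVec ((Lam ⊗ₖ D).mulVec w))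
      = -cbar * ((fun i => w (0,i)) ⬝ᵥ (Qm + Qmᵀ).mulVec (fun i => w (0,i)))
        + cbar * ((fun i => w (1,i)) ⬝ᵥ (Qm + Qmᵀ).mulVec (fun i => w (1,i))) := by
    have e1 : w ⬝ᵥ H2.mulVec ((Lam ⊗ₖ D).mulVec w) = w ⬝ᵥ (Lam ⊗ₖ Qm).mulVec w := by
      rw [Matrix.mulVec_mulVec, hH2A]
    have e2 : w ⬝ᵥ (Lam ⊗ₖ Qm).mulVec w = w ⬝ᵥ (Lam ⊗ₖ Qmᵀ).mulVec w := by
      have h := quad_transpose (Lam ⊗ₖ Qm) w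
      rw [← Matrix.kroneckerMap_transpose, hLamT] at h
      exact h.symm
    have q1 := kron_lam_quad N cbar Qm w
    have q2 := kron_lam_quad N cbar Qmᵀ w
    rw [e1]
    simp only [Matrix.add_mulVec, dotProduct_add]
    rw [hLam] at e2 ⊢
    linarith [q1, q2, e2]
  have hA3 : 2 * (w ⬝ᵥ H2.mulVec ((Lam ⊗ₖ D).mulVec w))
      = -cbar * (w (0, Fin.last N) * w (0, Fin.last N) - w (0,0) * w (0,0))
        + cbar * (w (1, Fin.last N) * w (1, Fin.last N) - w (1,0) * w (1,0)) := by
    rw [hA2, hSBP (fun i => w (0,i)) (fun i => w (0,i)), hSBP (fun i => w (1,i)) (fun i => w (1,i))]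
  -- the penalty part
  have hH2P : H2 * P
      = (-cbar) • ((vecMulVec E2 E2) ⊗ₖ (vecMulVec e0 e0)
            - R0 • ((vecMulVec E2 E1) ⊗ₖ (vecMulVec e0 e0)))
        + (-cbar) • ((vecMulVec E1 E1) ⊗ₖ (vecMulVec eN eN)
            - RL • ((vecMulVec E1 E2) ⊗ₖ (vecMulVec eN eN))) := by
    rw [hP, Matrix.mul_add, Matrix.mul_smul, Matrix.mul_smul, ← Matrix.mul_assoc,
      ← Matrix.mul_assoc, hinv, Matrix.one_mul, Matrix.one_mul]
  have hvmv : ∀ (u v : Fin 2 → ℝ) (a b : Fin (N+1) → ℝ),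
      (vecMulVec u v) ⊗ₖ (vecMulVec a b)
        = vecMulVec (fun p => u p.1 * a p.2) (fun p => v p.1 * b p.2) := by
    intro u v a b
    ext ⟨x, i⟩ ⟨y, j⟩
    simp [vecMulVec_apply, kroneckerMap_apply]
    ring
  have hquad : ∀ (u v : Fin 2 → ℝ) (a b : Fin (N+1) → ℝ),
      w ⬝ᵥ ((vecMulVec u v) ⊗ₖ (vecMulVec a b)).mulVec w
        = (w ⬝ᵥ fun p => u p.1 * a p.2) * ((fun p => v p.1 * b p.2) ⬝ᵥ w) := by
    intro u v a b
    rw [hvmv, quad_vmv]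
  have hdot : ∀ (x : Fin 2) (i : Fin (N+1)),
      (w ⬝ᵥ fun p : Fin 2 × Fin (N+1) => (Pi.single x 1 : Fin 2 → ℝ) p.1 * (Pi.single i 1 : Fin (N+1) → ℝ) p.2)
        = w (x, i) ∧
      ((fun p : Fin 2 × Fin (N+1) => (Pi.single x 1 : Fin 2 → ℝ) p.1 * (Pi.single i 1 : Fin (N+1) → ℝ) p.2) ⬝ᵥ w)
        = w (x, i) := by
    intro x i
    rw [single_prod]
    constructor
    · rw [dotProduct_single, mul_one]
    · rw [single_dotProduct, one_mul]
  have hPquad : w ⬝ᵥ H2.mulVec (P.mulVec w)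
      = -cbar * (w (1,0) * w (1,0) - R0 * (w (1,0) * w (0,0)))
        + -cbar * (w (0, Fin.last N) * w (0, Fin.last N)
            - RL * (w (0, Fin.last N) * w (1, Fin.last N))) := by
    rw [Matrix.mulVec_mulVec, hH2P]
    simp only [Matrix.add_mulVec, Matrix.smul_mulVec, Matrix.sub_mulVec,
      dotProduct_add, dotProduct_smul, dotProduct_sub, smul_eq_mul]
    rw [hquad E2 E2 e0 e0, hquad E2 E1 e0 e0, hquad E1 E1 eN eN, hquad E1 E2 eN eN]
    rw [hE1, hE2, he0, heN]
    rw [(hdot 1 0).1, (hdot 1 0).2, (hdot 0 0).2, (hdot 0 (Fin.last N)).1,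
      (hdot 0 (Fin.last N)).2, (hdot 1 (Fin.last N)).2]
    try ring
  -- Cauchy–Schwarz for the bounded term
  have hEnn : 0 ≤ w ⬝ᵥ H2.mulVec w := by
    rw [hH2d]
    simp only [dotProduct, mulVec_diagonal]
    exact Finset.sum_nonneg fun p _ => by nlinarith [hd_pos p, sq_nonneg (w p)]
  have hCS : w ⬝ᵥ H2.mulVec (B.mulVec w) ≤ μ * (w ⬝ᵥ H2.mulVec w) := by
    set u : Fin 2 × Fin (N+1) → ℝ := B.mulVec w with hu
    have huNN : 0 ≤ u ⬝ᵥ H2.mulVec u := by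
      rw [hH2d]
      simp only [dotProduct, mulVec_diagonal]
      exact Finset.sum_nonneg fun p _ => by nlinarith [hd_pos p, sq_nonneg (u p)]
    have step1 : w ⬝ᵥ H2.mulVec u
        = ∑ p, (Real.sqrt (d p) * w p) * (Real.sqrt (d p) * u p) := by
      rw [hH2d]
      simp only [dotProduct, mulVec_diagonal]
      refine Finset.sum_congr rfl fun p _ => ?_
      have h := Real.mul_self_sqrt (hd_pos p).le
      linear_combination (w p * u p) * h.symm
    have step2 := Real.sum_mul_le_sqrt_mul_sqrt (Finset.univ : Finset (Fin 2 × Fin (N+1)))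
      (fun p => Real.sqrt (d p) * w p) (fun p => Real.sqrt (d p) * u p)
    have sqw : ∑ p, (Real.sqrt (d p) * w p) ^ 2 = w ⬝ᵥ H2.mulVec w := by
      rw [hH2d]
      simp only [dotProduct, mulVec_diagonal]
      refine Finset.sum_congr rfl fun p _ => ?_
      have h := Real.mul_self_sqrt (hd_pos p).le
      linear_combination (w p ^ 2) * h
    have squ : ∑ p, (Real.sqrt (d p) * u p) ^ 2 = u ⬝ᵥ H2.mulVec u := by
      rw [hH2d]
      simp only [dotProduct, mulVec_diagonal]
      refine Finset.sum_congr rfl fun p _ => ?_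
      have h := Real.mul_self_sqrt (hd_pos p).le
      linear_combination (u p ^ 2) * h
    rw [sqw, squ] at step2
    have hbound := hμ w
    rw [← hu] at hbound
    have chain : w ⬝ᵥ H2.mulVec u
        ≤ Real.sqrt (w ⬝ᵥ H2.mulVec w) * (μ * Real.sqrt (w ⬝ᵥ H2.mulVec w)) := by
      calc w ⬝ᵥ H2.mulVec u = ∑ p, (Real.sqrt (d p) * w p) * (Real.sqrt (d p) * u p) := step1
        _ ≤ Real.sqrt (w ⬝ᵥ H2.mulVec w) * Real.sqrt (u ⬝ᵥ H2.mulVec u) := step2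
        _ ≤ Real.sqrt (w ⬝ᵥ H2.mulVec w) * (μ * Real.sqrt (w ⬝ᵥ H2.mulVec w)) := by
            exact mul_le_mul_of_nonneg_left hbound (Real.sqrt_nonneg _)
    calc w ⬝ᵥ H2.mulVec u
        ≤ Real.sqrt (w ⬝ᵥ H2.mulVec w) * (μ * Real.sqrt (w ⬝ᵥ H2.mulVec w)) := chain
      _ = μ * (Real.sqrt (w ⬝ᵥ H2.mulVec w) * Real.sqrt (w ⬝ᵥ H2.mulVec w)) := by ring
      _ = μ * (w ⬝ᵥ H2.mulVec w) := by rw [Real.mul_self_sqrt hEnn]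
  -- assemble
  have hEt : Eh t = w ⬝ᵥ H2.mulVec w := by rw [hEh]
  rw [hderiv2, hsplit, hEt]
  have hR0sq : R0 ^ 2 ≤ 1 := (sq_le_one_iff_abs_le_one R0).mpr hR0
  have hRLsq : RL ^ 2 ≤ 1 := (sq_le_one_iff_abs_le_one RL).mpr hRL
  have hbd : 2 * (-(w ⬝ᵥ H2.mulVec ((Lam ⊗ₖ D).mulVec w)) + w ⬝ᵥ H2.mulVec (P.mulVec w)) ≤ 0 := by
    have key : 2 * (-(w ⬝ᵥ H2.mulVec ((Lam ⊗ₖ D).mulVec w)) + w ⬝ᵥ H2.mulVec (P.mulVec w))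
        = -cbar * ((1 - R0^2) * (w (0,0))^2 + (w (1,0) - R0 * w (0,0))^2)
          + -cbar * ((1 - RL^2) * (w (1, Fin.last N))^2
              + (w (0, Fin.last N) - RL * w (1, Fin.last N))^2) := by
      rw [hPquad]
      linear_combination (-1 : ℝ) * hA3
    rw [key]
    have t1 : 0 ≤ cbar * ((1 - R0^2) * (w (0,0))^2) :=
      mul_nonneg hc.le (mul_nonneg (by linarith only [hR0sq]) (sq_nonneg _))
    have t2 : 0 ≤ cbar * ((1 - RL^2) * (w (1, Fin.last N))^2) :=
      mul_nonneg hc.le (mul_nonneg (by linarith only [hRLsq]) (sq_nonneg _))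
    have t3 : 0 ≤ cbar * (w (1,0) - R0 * w (0,0))^2 := mul_nonneg hc.le (sq_nonneg _)
    have t4 : 0 ≤ cbar * (w (0, Fin.last N) - RL * w (1, Fin.last N))^2 :=
      mul_nonneg hc.le (sq_nonneg _)
    linarith only [t1, t2, t3, t4]
  linarith only [hbd, hCS]
end
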